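/- Let μ_k : [0,1]^d → ℝ for k in a finite set K, each satisfying the Hölder condition |μ_k(x) − μ_k(x')| ≤ L‖x−x'‖^γ. Let p be a hypercube of side 1/m and define k*(x) = argmax_{k∈K} μ_k(x). If an action k satisfies inf_{x∈p} μ_{k*(x*_p)}(x) − sup_{x∈p} μ_k(x) ≤ Δ (i.e., k is 'near optimal' for p), then for every x ∈ p, μ_{k*(x)}(x) − μ_k(x) ≤ Δ + 3L(√d/m)^γ. -/

import Mathlib

def unifCube (d m : ℕ) (k : Fin d → ℕ) : Set (EuclideanSpace ℝ (Fin d)) :=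
  {x | ∀ i, x i ∈ Set.Icc ((k i : ℝ) / m) (((k i : ℝ) + 1) / m)}

noncomputable def cubeCenter (d m : ℕ) (k : Fin d → ℕ) : EuclideanSpace ℝ (Fin d) :=
  WithLp.toLp 2 (fun i => ((k i : ℝ) + 1 / 2) / m)

lemma cubeCenter_mem (d m : ℕ) (hm : 0 < m) (kk : Fin d → ℕ) :
    cubeCenter d m kk ∈ unifCube d m kk := by
  intro i
  have hm' : (0:ℝ) < m := by exact_mod_cast hm
  constructor <;> [exact div_le_div_of_nonneg_right (by linarith) hm'.le ;
    exact div_le_div_of_nonneg_right (by linarith) hm'.le]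

lemma cube_dist (d m : ℕ) (hm : 0 < m) (kk : Fin d → ℕ)
    (x x' : EuclideanSpace ℝ (Fin d)) (hx : x ∈ unifCube d m kk)
    (hx' : x' ∈ unifCube d m kk) : ‖x - x'‖ ≤ Real.sqrt d / m := by
  have hm' : (0:ℝ) < m := by exact_mod_cast hm
  have h : ∀ i, |x i - x' i| ≤ 1 / m := by
    intro i
    have h1 := hx i
    have h2 := hx' i
    simp only [Set.mem_Icc] at h1 h2
    have heq : ((kk i : ℝ)+1)/m - (kk i : ℝ)/m = 1/m := by ring
    rw [abs_sub_le_iff]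
    constructor <;> linarith [h1.1, h1.2, h2.1, h2.2]
  rw [EuclideanSpace.norm_eq]
  have hsum : ∑ i, ‖(x - x') i‖ ^ 2 ≤ ∑ _i : Fin d, (1/m:ℝ)^2 := by
    apply Finset.sum_le_sum
    intro i _
    have : ‖(x - x') i‖ = |x i - x' i| := by
      simp [Real.norm_eq_abs]
    rw [this]
    have := h i
    have h0 : (0:ℝ) ≤ |x i - x' i| := abs_nonneg _
    nlinarith
  calc Real.sqrt (∑ i, ‖(x - x') i‖ ^ 2) ≤ Real.sqrt (∑ _i : Fin d, (1/m:ℝ)^2) :=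
        Real.sqrt_le_sqrt hsum
    _ = Real.sqrt (d * (1/m)^2) := by simp [Finset.sum_const, mul_comm]
    _ = Real.sqrt d * (1/m) := by
        rw [Real.sqrt_mul (by positivity), Real.sqrt_sq (by positivity)]
    _ = Real.sqrt d / m := by ring

theorem near_optimal_action_regret (d m : ℕ) (hd : 0 < d) (hm : 0 < m)
    (K : Type*) [Fintype K] [Nonempty K]
    (μ : K → EuclideanSpace ℝ (Fin d) → ℝ) (L γ : ℝ) (hL : 0 < L) (hγ : 0 < γ)
    (hHolder : ∀ (a : K) (x x' : EuclideanSpace ℝ (Fin d)),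
      |μ a x - μ a x'| ≤ L * ‖x - x'‖ ^ γ)
    (kstar : EuclideanSpace ℝ (Fin d) → K)
    (hkstar : ∀ x a, μ a x ≤ μ (kstar x) x)
    (kk : Fin d → ℕ) (hkk : ∀ i, kk i < m)
    (a : K) (Δ : ℝ)
    (hnear : sInf ((fun x => μ (kstar (cubeCenter d m kk)) x) '' unifCube d m kk)
        - sSup ((fun x => μ a x) '' unifCube d m kk) ≤ Δ) :
    ∀ x ∈ unifCube d m kk,
      μ (kstar x) x - μ a x ≤ Δ + 3 * L * (Real.sqrt d / m) ^ γ := by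
  intro x hx
  set c := cubeCenter d m kk with hc
  have hcmem : c ∈ unifCube d m kk := cubeCenter_mem d m hm kk
  set E := L * (Real.sqrt d / m) ^ γ with hE
  have hE0 : 0 ≤ E := by
    apply mul_nonneg hL.le
    exact Real.rpow_nonneg (by positivity) γ
  -- key Hölder bound within cube
  have hbound : ∀ (b : K) (y y' : EuclideanSpace ℝ (Fin d)),
      y ∈ unifCube d m kk → y' ∈ unifCube d m kk → |μ b y - μ b y'| ≤ E := by
    intro b y y' hy hy'
    refine (hHolder b y y').trans ?_
    apply mul_le_mul_of_nonneg_left _ hL.le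
    exact Real.rpow_le_rpow (norm_nonneg _) (cube_dist d m hm kk y y' hy hy') hγ.le
  -- sInf bound
  have hInf : μ (kstar c) c - E ≤
      sInf ((fun x => μ (kstar c) x) '' unifCube d m kk) := by
    apply le_csInf (Set.Nonempty.image _ ⟨c, hcmem⟩)
    rintro _ ⟨y, hy, rfl⟩
    have := hbound (kstar c) c y hcmem hy
    have := abs_le.mp this
    linarith [this.1]
  -- sSup bound
  have hSup : sSup ((fun x => μ a x) '' unifCube d m kk) ≤ μ a x + E := by
    apply csSup_le (Set.Nonempty.image _ ⟨c, hcmem⟩)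
    rintro _ ⟨y, hy, rfl⟩
    have := abs_le.mp (hbound a y x hy hx)
    linarith [this.2]
  have h1 : |μ (kstar x) x - μ (kstar x) c| ≤ E := hbound _ x c hx hcmem
  have h1' := (abs_le.mp h1).2
  have h2 : μ (kstar x) c ≤ μ (kstar c) c := hkstar c (kstar x)
  have h3 : 3 * L * (Real.sqrt d / m) ^ γ = 3 * E := by rw [hE]; ring
  rw [h3]
  linarith
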